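/- Let E, Z, S ∈ ℂ with Z ≠ 0. There exists V ∈ ℂ such that conj(S)·Z = conj(V)·(E − V) if and only if |E|² ≥ 2(Re(S·conj(Z)) + |S|·|Z|). -/

import Mathlib

open Complex

theorem two_bus_solvability
    (E Z S : ℂ) (hZ : Z ≠ 0) :
    (∃ V : ℂ, (starRingEnd ℂ) S * Z = (starRingEnd ℂ) V * (E - V)) ↔
      ‖E‖ ^ 2 ≥ 2 * ((S * (starRingEnd ℂ) Z).re + ‖S‖ * ‖Z‖) := by
  set W : ℂ := (starRingEnd ℂ) S * Z with hW
  have hWre : (S * (starRingEnd ℂ) Z).re = W.re := by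
    have : S * (starRingEnd ℂ) Z = (starRingEnd ℂ) W := by
      simp [hW, map_mul, mul_comm]
    rw [this, Complex.conj_re]
  have hWabs : ‖S‖ * ‖Z‖ = ‖W‖ := by
    simp [hW, map_mul]
  rw [hWre, hWabs]
  have habsE : ‖E‖ ^ 2 = Complex.normSq E := Complex.sq_norm E
  have hm0 : 0 ≤ ‖W‖ := norm_nonneg W
  have hmsq : ‖W‖ ^ 2 = W.re ^ 2 + W.im ^ 2 := by
    rw [Complex.sq_norm, Complex.normSq_apply]; ring
  constructor
  · rintro ⟨V, h⟩
    set u : ℂ := (starRingEnd ℂ) V * E with hu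
    have hWeq : W = u - (Complex.normSq V : ℂ) := by
      rw [h, mul_sub, hu, Complex.conj_mul']
      norm_cast
      rw [Complex.sq_norm]
    set a := u.re; set b := u.im
    set s := Complex.normSq V with hs
    set t := Complex.normSq E with ht
    have hre : W.re = a - s := by rw [hWeq]; simp; rfl
    have him : W.im = b := by rw [hWeq]; simp; rfl
    have hust : a ^ 2 + b ^ 2 = s * t := by
      have : Complex.normSq u = s * t := by
        rw [hu, Complex.normSq_mul, Complex.normSq_conj]
      rw [← this, Complex.normSq_apply]; ring
    have hs0 : 0 ≤ s := Complex.normSq_nonneg V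
    have ht0 : 0 ≤ t := Complex.normSq_nonneg E
    set m := ‖W‖ with hm
    have hmsq' : m ^ 2 = (a - s) ^ 2 + b ^ 2 := by rw [hmsq, hre, him]
    have hR : 0 ≤ t / 2 - a + s := by nlinarith [sq_nonneg (t / 2 - s), sq_nonneg b]
    have hle : m ≤ t / 2 - a + s := by nlinarith [sq_nonneg (t / 2 - a)]
    rw [habsE, hre]
    linarith
  · intro h
    rw [habsE] at h
    set t := Complex.normSq E with ht
    set r := W.re; set i := W.im
    set m := ‖W‖ with hm
    have hrm : r ≤ m := Complex.re_le_norm W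
    by_cases hE : E = 0
    · -- then t = 0, W = -m, take V = sqrt m
      have ht0 : t = 0 := by rw [ht, hE]; simp
      have hrm' : r = -m := by
        have : r ≤ -m := by rw [ht0] at h; linarith
        have h2 := Complex.abs_re_le_norm W
        have h3 := neg_abs_le W.re
        linarith
      have hi0 : i = 0 := by nlinarith [hmsq]
      refine ⟨(Real.sqrt m : ℂ), ?_⟩
      have hWval : W = (r : ℂ) := Complex.ext rfl hi0
      rw [hWval, hE]
      have : ((starRingEnd ℂ) (Real.sqrt m : ℂ)) = (Real.sqrt m : ℂ) := by
        simp
      rw [this]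
      push_cast [hrm']
      rw [show ((Real.sqrt m : ℝ) : ℂ) * (0 - (Real.sqrt m : ℝ)) = -(((Real.sqrt m : ℝ) : ℂ) * ((Real.sqrt m : ℝ))) by ring]
      norm_cast
      rw [Real.mul_self_sqrt hm0]
    · have ht0 : 0 < t := Complex.normSq_pos.mpr hE
      set D := t ^ 2 - 4 * r * t - 4 * i ^ 2 with hD
      have hD0 : 0 ≤ D := by nlinarith [hmsq]
      set q := Real.sqrt D with hq
      have hq2 : q ^ 2 = D := Real.sq_sqrt hD0
      set x := (t + q) / (2 * t) with hx
      set y := -i / t with hy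
      have hxr : t * (x - x ^ 2 - y ^ 2) = r := by
        rw [hx, hy]
        field_simp
        linear_combination (-1) * hq2
      have hyr : -(t * y) = i := by rw [hy]; field_simp
      refine ⟨((x : ℂ) + (y : ℂ) * Complex.I) * E, ?_⟩
      have hE2 : (starRingEnd ℂ) E * E = (t : ℂ) := by
        rw [mul_comm, Complex.mul_conj]
      have hWval : W = (r : ℂ) + (i : ℂ) * Complex.I := (Complex.re_add_im W).symm
      rw [hWval]
      have hre : (r : ℂ) = (t : ℂ) * ((x : ℂ) - (x : ℂ) ^ 2 - (y : ℂ) ^ 2) := by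
        rw [← hxr]; push_cast; ring
      have him : (i : ℂ) = -((t : ℂ) * (y : ℂ)) := by
        rw [← hyr]; push_cast; ring
      rw [hre, him]
      simp only [map_mul, map_add, Complex.conj_I, Complex.conj_ofReal]
      linear_combination (-(((x : ℂ) - (x : ℂ) ^ 2 + (y : ℂ) ^ 2 * Complex.I ^ 2) - (y : ℂ) * Complex.I)) * hE2 + (-(t : ℂ) * (y : ℂ) ^ 2) * Complex.I_sq
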